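/- arXiv:2007.04157 — 2 statements merged into one kernel-verified Lean document; each statement's English description precedes it below -/
import Mathlib

section
/- Let α ≤ 1, β₁, β₂, γ ≥ 0, C > 0, and let μ₁, μ₂ : [0,∞) → [0,∞) be increasing functions. Then there exists a constant K > 0 such that for all t ≥ 0, ∫₀ᵗ (1+t-τ)^{-α} (1+τ)^{-1} (μ₁(C(1+τ)^{-γ}))^{β₁} (μ₂(C(1+τ)^{-γ}))^{β₂} dτ ≤ K (1+t)^{-α} ∫₀ᵗ (1+τ)^{-1} (μ₁(C(1+τ)^{-γ}))^{β₁} (μ₂(C(1+τ)^{-γ}))^{β₂} dτ. -/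
open MeasureTheory Real

/-- key power comparison: if `X/2 ≤ x ≤ X` and `α ≤ 1` then `x^(-α) ≤ 2 * X^(-α)`. -/
lemma aux_pow_cmp (α x X : ℝ) (hα : α ≤ 1) (hx : 0 < x) (hX2 : X ≤ 2 * x)
    (hxX : x ≤ X) : x ^ (-α) ≤ 2 * X ^ (-α) := by
  have hXpos : 0 < X := lt_of_lt_of_le hx hxX
  rcases le_or_gt 0 α with h0 | h0
  · have h2 : X / 2 ≤ x := by linarith
    have hX2pos : 0 < X / 2 := by linarith
    have step1 : x ^ (-α) ≤ (X / 2) ^ (-α) :=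
      Real.rpow_le_rpow_of_nonpos hX2pos h2 (by linarith)
    have step2 : (X / 2) ^ (-α) = X ^ (-α) * (2 : ℝ) ^ α := by
      rw [Real.div_rpow hXpos.le (by norm_num : (0:ℝ) ≤ 2), Real.rpow_neg (by norm_num : (0:ℝ) ≤ 2)]
      field_simp
    have step3 : (2 : ℝ) ^ α ≤ 2 := by
      calc (2:ℝ) ^ α ≤ (2:ℝ) ^ (1:ℝ) := Real.rpow_le_rpow_of_exponent_le one_le_two hα
      _ = 2 := Real.rpow_one 2
    calc x ^ (-α) ≤ X ^ (-α) * (2:ℝ) ^ α := by rw [← step2]; exact step1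
    _ ≤ X ^ (-α) * 2 := by
        exact mul_le_mul_of_nonneg_left step3 (Real.rpow_nonneg hXpos.le _)
    _ = 2 * X ^ (-α) := by ring
  · have h1 : x ^ (-α) ≤ X ^ (-α) := Real.rpow_le_rpow hx.le hxX (by linarith)
    have h2 : 0 ≤ X ^ (-α) := Real.rpow_nonneg hXpos.le _
    linarith

/-- a measurable function bounded on an interval is interval integrable. -/
lemma aux_bdd_intervalIntegrable {f : ℝ → ℝ} {a b M : ℝ} (hab : a ≤ b)
    (hm : AEStronglyMeasurable f (volume.restrict (Set.Ioc a b)))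
    (hbd : ∀ x ∈ Set.Ioc a b, ‖f x‖ ≤ M) : IntervalIntegrable f volume a b := by
  rw [intervalIntegrable_iff, Set.uIoc_of_le hab]
  exact Integrable.mono' (integrableOn_const measure_Ioc_lt_top.ne) hm
    ((ae_restrict_iff' measurableSet_Ioc).mpr (Filter.Eventually.of_forall fun x hx => hbd x hx))

theorem stmt_0 (α β₁ β₂ γ C : ℝ) (hα : α ≤ 1) (hβ₁ : 0 ≤ β₁) (hβ₂ : 0 ≤ β₂)
    (hγ : 0 ≤ γ) (hC : 0 < C) (μ₁ μ₂ : ℝ → ℝ)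
    (hμ₁ : Monotone μ₁) (hμ₂ : Monotone μ₂)
    (hμ₁0 : ∀ s, 0 ≤ μ₁ s) (hμ₂0 : ∀ s, 0 ≤ μ₂ s) :
    ∃ K > (0:ℝ), ∀ t ≥ (0:ℝ),
      (∫ τ in (0:ℝ)..t, (1 + t - τ) ^ (-α) * (1 + τ)⁻¹ *
        (μ₁ (C * (1 + τ) ^ (-γ))) ^ β₁ * (μ₂ (C * (1 + τ) ^ (-γ))) ^ β₂)
      ≤ K * (1 + t) ^ (-α) *
        ∫ τ in (0:ℝ)..t, (1 + τ)⁻¹ *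
          (μ₁ (C * (1 + τ) ^ (-γ))) ^ β₁ * (μ₂ (C * (1 + τ) ^ (-γ))) ^ β₂ := by
  refine ⟨4, by norm_num, ?_⟩
  intro t ht
  set m : ℝ := t / 2 with hm_def
  have hm0 : 0 ≤ m := by positivity
  have hmt : m ≤ t := by simp only [hm_def]; linarith
  -- the (globally) antitone version of the μ-part
  set e : ℝ → ℝ := fun τ => C * (1 + max 0 τ) ^ (-γ) with he_def
  set P : ℝ → ℝ := fun τ => (μ₁ (e τ)) ^ β₁ * (μ₂ (e τ)) ^ β₂ with hP_def
  have he_anti : Antitone e := by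
    intro a b hab
    have h1 : (0 : ℝ) < 1 + max 0 a := by positivity
    have h2 : 1 + max 0 a ≤ 1 + max 0 b := by
      have := max_le_max (le_refl (0:ℝ)) hab
      linarith
    exact mul_le_mul_of_nonneg_left
      (Real.rpow_le_rpow_of_nonpos h1 h2 (by linarith)) hC.le
  have hP_anti : Antitone P := by
    intro a b hab
    exact mul_le_mul (Real.rpow_le_rpow (hμ₁0 _) (hμ₁ (he_anti hab)) hβ₁)
      (Real.rpow_le_rpow (hμ₂0 _) (hμ₂ (he_anti hab)) hβ₂)
      (Real.rpow_nonneg (hμ₂0 _) _) (Real.rpow_nonneg (hμ₁0 _) _)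
  have hP_nonneg : ∀ τ, 0 ≤ P τ := fun τ =>
    mul_nonneg (Real.rpow_nonneg (hμ₁0 _) _) (Real.rpow_nonneg (hμ₂0 _) _)
  have hP_meas : Measurable P := hP_anti.measurable
  -- the two integrands
  set G : ℝ → ℝ := fun τ => (1 + τ)⁻¹ * P τ with hG_def
  set F : ℝ → ℝ := fun τ => (1 + t - τ) ^ (-α) * G τ with hF_def
  have hG_nonneg : ∀ τ, 0 ≤ τ → 0 ≤ G τ := fun τ hτ =>
    mul_nonneg (by positivity) (hP_nonneg τ)
  have hG_le : ∀ τ, 0 ≤ τ → G τ ≤ P 0 := by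
    intro τ hτ
    have h1 : (1 + τ)⁻¹ ≤ 1 := by
      rw [inv_le_one_iff₀]; right; linarith
    calc G τ = (1 + τ)⁻¹ * P τ := rfl
    _ ≤ 1 * P 0 := mul_le_mul h1 (hP_anti hτ) (hP_nonneg τ) zero_le_one
    _ = P 0 := one_mul _
  have hG_meas : Measurable G :=
    ((measurable_const.add measurable_id).inv).mul hP_meas
  have hGint : ∀ a b : ℝ, 0 ≤ a → a ≤ b → IntervalIntegrable G volume a b := by
    intro a b ha hab
    refine aux_bdd_intervalIntegrable hab hG_meas.aestronglyMeasurable (M := P 0) ?_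
    intro x hx
    have hx0 : 0 ≤ x := le_of_lt (lt_of_le_of_lt ha hx.1)
    rw [Real.norm_eq_abs, abs_of_nonneg (hG_nonneg x hx0)]
    exact hG_le x hx0
  -- bound for the weight
  have hw_bd : ∀ τ, 0 ≤ τ → τ ≤ t → (1 + t - τ) ^ (-α) ≤ (1 + t) ^ (-α) + 1 := by
    intro τ h0 hτt
    have hXnn : (0:ℝ) ≤ (1+t) ^ (-α) := Real.rpow_nonneg (by linarith) _
    rcases le_or_gt α 0 with h | h
    · have : (1 + t - τ) ^ (-α) ≤ (1 + t) ^ (-α) :=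
        Real.rpow_le_rpow (by linarith) (by linarith) (by linarith)
      linarith
    · have h1 : (1 + t - τ) ^ (-α) ≤ (1:ℝ) ^ (-α) :=
        Real.rpow_le_rpow_of_nonpos one_pos (by linarith) (by linarith)
      rw [Real.one_rpow] at h1
      linarith
  have hFint : ∀ a b : ℝ, 0 ≤ a → a ≤ b → b ≤ t → IntervalIntegrable F volume a b := by
    intro a b ha hab hbt
    have hWmeas : Measurable fun τ : ℝ => Real.exp (Real.log (1 + t - τ) * (-α)) :=
      ((Real.measurable_log.comp (measurable_const.sub measurable_id)).mul_const _).exp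
    have haesm : AEStronglyMeasurable F (volume.restrict (Set.Ioc a b)) := by
      refine AEStronglyMeasurable.congr
        ((hWmeas.mul hG_meas).aestronglyMeasurable) ?_
      refine (ae_restrict_iff' measurableSet_Ioc).mpr (Filter.Eventually.of_forall ?_)
      intro x hx
      have hpos : (0:ℝ) < 1 + t - x := by
        have := hx.2; linarith
      simp only [hF_def]
      rw [Real.rpow_def_of_pos hpos]
      rfl
    refine aux_bdd_intervalIntegrable hab haesm (M := ((1+t) ^ (-α) + 1) * P 0) ?_
    intro x hx
    have hx0 : 0 ≤ x := le_of_lt (lt_of_le_of_lt ha hx.1)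
    have hxt : x ≤ t := le_trans hx.2 hbt
    have hpos : (0:ℝ) < 1 + t - x := by linarith
    have hFnn : 0 ≤ F x :=
      mul_nonneg (Real.rpow_nonneg hpos.le _) (hG_nonneg x hx0)
    rw [Real.norm_eq_abs, abs_of_nonneg hFnn]
    exact mul_le_mul (hw_bd x hx0 hxt) (hG_le x hx0) (hG_nonneg x hx0)
      (by positivity)
  -- rewrite the goal using F and G
  have hEqOn : ∀ τ ∈ Set.uIcc (0:ℝ) t,
      (1 + t - τ) ^ (-α) * (1 + τ)⁻¹ *
        (μ₁ (C * (1 + τ) ^ (-γ))) ^ β₁ * (μ₂ (C * (1 + τ) ^ (-γ))) ^ β₂ = F τ := by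
    intro τ hτ
    rw [Set.uIcc_of_le ht] at hτ
    simp only [hF_def, hG_def, hP_def, he_def, max_eq_right hτ.1]
    ring
  have hEqOn' : ∀ τ ∈ Set.uIcc (0:ℝ) t,
      (1 + τ)⁻¹ *
        (μ₁ (C * (1 + τ) ^ (-γ))) ^ β₁ * (μ₂ (C * (1 + τ) ^ (-γ))) ^ β₂ = G τ := by
    intro τ hτ
    rw [Set.uIcc_of_le ht] at hτ
    simp only [hG_def, hP_def, he_def, max_eq_right hτ.1]
    ring
  rw [intervalIntegral.integral_congr hEqOn, intervalIntegral.integral_congr hEqOn']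
  -- nonnegativity of the total integral of G
  have hGInt_nonneg : 0 ≤ ∫ τ in (0:ℝ)..t, G τ :=
    intervalIntegral.integral_nonneg ht fun u hu => hG_nonneg u hu.1
  have hGmono : (∫ τ in (0:ℝ)..m, G τ) ≤ ∫ τ in (0:ℝ)..t, G τ :=
    intervalIntegral.integral_mono_interval le_rfl hm0 hmt
      ((ae_restrict_iff' measurableSet_Ioc).mpr
        (Filter.Eventually.of_forall fun x hx => hG_nonneg x hx.1.le))
      (hGint 0 t le_rfl ht)
  -- head estimate
  have key1 : (∫ τ in (0:ℝ)..m, F τ) ≤ 2 * (1+t) ^ (-α) * ∫ τ in (0:ℝ)..t, G τ := by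
    have h1 : (∫ τ in (0:ℝ)..m, F τ) ≤ ∫ τ in (0:ℝ)..m, 2 * (1+t) ^ (-α) * G τ := by
      refine intervalIntegral.integral_mono_on hm0 (hFint 0 m le_rfl hm0 hmt)
        ((hGint 0 m le_rfl hm0).const_mul _) ?_
      intro τ hτ
      have hw : (1 + t - τ) ^ (-α) ≤ 2 * (1+t) ^ (-α) := by
        refine aux_pow_cmp α (1+t-τ) (1+t) hα ?_ ?_ ?_
        · have := hτ.2; simp only [hm_def] at this; linarith [hτ.1]
        · have := hτ.2; simp only [hm_def] at this; linarith
        · linarith [hτ.1]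
      exact mul_le_mul_of_nonneg_right hw (hG_nonneg τ hτ.1)
    rw [intervalIntegral.integral_const_mul] at h1
    have h2 : 2 * (1+t) ^ (-α) * (∫ τ in (0:ℝ)..m, G τ)
        ≤ 2 * (1+t) ^ (-α) * ∫ τ in (0:ℝ)..t, G τ := by
      apply mul_le_mul_of_nonneg_left hGmono
      positivity
    linarith
  -- tail estimate
  have hpm : (0:ℝ) < 1 + m := by linarith
  have key2 : (∫ τ in m..t, F τ) ≤ 2 * (1+t) ^ (-α) * ∫ τ in (0:ℝ)..t, G τ := by
    have e2 : (1+m) ^ ((1:ℝ)-α) * (1+m)⁻¹ = (1+m) ^ (-α) := by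
      rw [← Real.rpow_neg_one (1+m), ← Real.rpow_add hpm]
      congr 1
      ring
    -- pointwise bound on [m, t]
    have hpt : ∀ τ ∈ Set.Icc m t, F τ ≤ ((1+m) ^ (-α) * P m) * (1 + t - τ)⁻¹ := by
      intro τ hτ
      have hx : (0:ℝ) < 1 + t - τ := by have := hτ.2; linarith
      have hxm : 1 + t - τ ≤ 1 + m := by have := hτ.1; simp only [hm_def] at *; linarith
      have e1 : (1 + t - τ) ^ (-α) = (1+t-τ) ^ ((1:ℝ)-α) * (1+t-τ)⁻¹ := by
        rw [← Real.rpow_neg_one (1+t-τ), ← Real.rpow_add hx]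
        congr 1
        ring
      have hb1 : (1+t-τ) ^ ((1:ℝ)-α) ≤ (1+m) ^ ((1:ℝ)-α) :=
        Real.rpow_le_rpow hx.le hxm (by linarith)
      have hb2 : (1+τ)⁻¹ ≤ (1+m)⁻¹ := by
        apply inv_anti₀ hpm
        have := hτ.1; linarith
      have hb3 : P τ ≤ P m := hP_anti hτ.1
      have hG1 : G τ ≤ (1+m)⁻¹ * P m := by
        exact mul_le_mul hb2 hb3 (hP_nonneg τ) (by positivity)
      calc F τ = ((1+t-τ) ^ ((1:ℝ)-α) * G τ) * (1+t-τ)⁻¹ := by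
            simp only [hF_def]; rw [e1]; ring
      _ ≤ ((1+m) ^ ((1:ℝ)-α) * ((1+m)⁻¹ * P m)) * (1+t-τ)⁻¹ := by
            apply mul_le_mul_of_nonneg_right _ (by positivity)
            exact mul_le_mul hb1 hG1 (hG_nonneg τ (by have := hτ.1; linarith))
              (Real.rpow_nonneg hpm.le _)
      _ = ((1+m) ^ (-α) * P m) * (1 + t - τ)⁻¹ := by rw [← mul_assoc, e2]
    -- integrability of the comparison function
    have hcont : ContinuousOn (fun τ : ℝ => ((1+m) ^ (-α) * P m) * (1 + t - τ)⁻¹)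
        (Set.uIcc m t) := by
      apply ContinuousOn.mul continuousOn_const
      apply ContinuousOn.inv₀ (by fun_prop)
      intro x hx
      rw [Set.uIcc_of_le hmt] at hx
      have := hx.2
      intro hc
      nlinarith [hx.2]
    have h1 : (∫ τ in m..t, F τ)
        ≤ ∫ τ in m..t, ((1+m) ^ (-α) * P m) * (1 + t - τ)⁻¹ :=
      intervalIntegral.integral_mono_on hmt (hFint m t hm0 hmt le_rfl)
        hcont.intervalIntegrable hpt
    -- compute the comparison integral
    have hcomp : (∫ τ in m..t, (1 + t - τ)⁻¹) = Real.log (1+m) := by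
      have h := intervalIntegral.integral_comp_sub_left (a := m) (b := t)
        (fun x : ℝ => x⁻¹) (1 + t)
      rw [h]
      have e3 : 1 + t - t = (1:ℝ) := by ring
      have e4 : 1 + t - m = 1 + m := by simp only [hm_def]; ring
      have hnot : (0:ℝ) ∉ Set.uIcc 1 (1+m) := by
        rw [Set.uIcc_of_le (by linarith : (1:ℝ) ≤ 1+m)]
        intro hc
        exact absurd hc.1 (by norm_num)
      rw [e3, e4, integral_inv hnot, div_one]
    have h2 : (∫ τ in m..t, ((1+m) ^ (-α) * P m) * (1 + t - τ)⁻¹)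
        = ((1+m) ^ (-α) * P m) * Real.log (1+m) := by
      rw [intervalIntegral.integral_const_mul, hcomp]
    -- lower bound for the G-integral
    have hlow : P m * Real.log (1+m) ≤ ∫ τ in (0:ℝ)..t, G τ := by
      have h3 : (∫ τ in (0:ℝ)..m, P m * (1+τ)⁻¹) ≤ ∫ τ in (0:ℝ)..m, G τ := by
        refine intervalIntegral.integral_mono_on hm0 ?_ (hGint 0 m le_rfl hm0) ?_
        · apply ContinuousOn.intervalIntegrable
          apply ContinuousOn.mul continuousOn_const
          apply ContinuousOn.inv₀ (by fun_prop)
          intro x hx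
          rw [Set.uIcc_of_le hm0] at hx
          intro hc
          nlinarith [hx.1]
        · intro τ hτ
          have : P m ≤ P τ := hP_anti hτ.2
          calc P m * (1+τ)⁻¹ = (1+τ)⁻¹ * P m := by ring
          _ ≤ (1+τ)⁻¹ * P τ := by
              apply mul_le_mul_of_nonneg_left this
              have := hτ.1; positivity
      have h4 : (∫ τ in (0:ℝ)..m, P m * (1+τ)⁻¹) = P m * Real.log (1+m) := by
        rw [intervalIntegral.integral_const_mul]
        have h5 : (∫ τ in (0:ℝ)..m, (1+τ)⁻¹) = ∫ τ in (0:ℝ)..m, (fun x : ℝ => x⁻¹) (τ + 1) := by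
          apply intervalIntegral.integral_congr
          intro τ _
          simp [add_comm]
        rw [h5, intervalIntegral.integral_comp_add_right (fun x : ℝ => x⁻¹) 1]
        rw [zero_add]
        have hnot : (0:ℝ) ∉ Set.uIcc 1 (m+1) := by
          rw [Set.uIcc_of_le (by linarith : (1:ℝ) ≤ m+1)]
          intro hc
          exact absurd hc.1 (by norm_num)
        rw [integral_inv hnot, div_one]
        rw [add_comm]
      linarith [le_trans (le_of_eq h4.symm) h3, hGmono]
    -- combine
    have hcmp : (1+m) ^ (-α) ≤ 2 * (1+t) ^ (-α) := by
      refine aux_pow_cmp α (1+m) (1+t) hα hpm ?_ (by linarith)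
      simp only [hm_def]; linarith
    calc (∫ τ in m..t, F τ) ≤ ((1+m) ^ (-α) * P m) * Real.log (1+m) := by
          rw [← h2]; exact h1
    _ = (1+m) ^ (-α) * (P m * Real.log (1+m)) := by ring
    _ ≤ (1+m) ^ (-α) * ∫ τ in (0:ℝ)..t, G τ :=
        mul_le_mul_of_nonneg_left hlow (Real.rpow_nonneg hpm.le _)
    _ ≤ (2 * (1+t) ^ (-α)) * ∫ τ in (0:ℝ)..t, G τ :=
        mul_le_mul_of_nonneg_right hcmp hGInt_nonneg
  -- put it together
  have hsplit : (∫ τ in (0:ℝ)..m, F τ) + (∫ τ in m..t, F τ) = ∫ τ in (0:ℝ)..t, F τ :=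
    intervalIntegral.integral_add_adjacent_intervals (hFint 0 m le_rfl hm0 hmt)
      (hFint m t hm0 hmt le_rfl)
  rw [← hsplit]
  linarith
end

section
/- Let p, q > 1, n > 0 with (q+1)/(pq-1) = n/2. Suppose G : [R₀,∞) → (0,∞) is C¹, increasing, and satisfies G'(r) ≥ (C/r) (μ₁(C₀ r^{-n}))^{q/(q+1)} (μ₂(C₀ r^{-n}))^{1/(q+1)} G(r)^{q(p+1)/(q+1)} for all r > R₀, where μ₁, μ₂ are nonnegative measurable and C, C₀ > 0. Then ∫₀^{C₀ R₀^{-n}} (1/s)(μ₁(s))^{q/(q+1)}(μ₂(s))^{1/(q+1)} ds ≤ K (G(R₀))^{-2/n} for some constant K > 0 depending only on C, n, p, q. In particular, if this last integral diverges, no such G exists. -/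
open Real Set MeasureTheory

private lemma lintegral_image_eq_lintegral_abs_deriv_mul'' {s : Set ℝ} {f f' : ℝ → ℝ}
    (hs : MeasurableSet s) (hf' : ∀ x ∈ s, HasDerivWithinAt f (f' x) s x)
    (hf : InjOn f s) (g : ℝ → ENNReal) :
    ∫⁻ x in f '' s, g x = ∫⁻ x in s, ENNReal.ofReal |f' x| * g (f x) := by
  simpa only [ContinuousLinearMap.det_toSpanSingleton] using
    lintegral_image_eq_lintegral_abs_det_fderiv_mul volume hs
      (fun x hx => (hf' x hx).hasFDerivWithinAt) hf g

theorem stmt_13 (p q n C : ℝ) (hp : 1 < p) (hq : 1 < q) (hn : 0 < n) (hC : 0 < C)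
    (hcrit : (q + 1) / (p * q - 1) = n / 2) :
    ∃ K > (0:ℝ), ∀ (G μ₁ μ₂ : ℝ → ℝ) (C₀ R₀ : ℝ), 0 < C₀ → 0 < R₀ →
      ContDiffOn ℝ 1 G (Ici R₀) → MonotoneOn G (Ici R₀) →
      (∀ r ∈ Ici R₀, 0 < G r) →
      Measurable μ₁ → Measurable μ₂ → (∀ s, 0 ≤ μ₁ s) → (∀ s, 0 ≤ μ₂ s) →
      (∀ r > R₀, deriv G r ≥
        (C / r) * (μ₁ (C₀ * r ^ (-n))) ^ (q / (q + 1)) *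
          (μ₂ (C₀ * r ^ (-n))) ^ (1 / (q + 1)) * (G r) ^ (q * (p + 1) / (q + 1))) →
      (∫⁻ s in Ioc (0:ℝ) (C₀ * R₀ ^ (-n)),
          ENNReal.ofReal ((1 / s) * (μ₁ s) ^ (q / (q + 1)) * (μ₂ s) ^ (1 / (q + 1))))
        ≤ ENNReal.ofReal (K * (G R₀) ^ (-2 / n)) := by
  have hq1 : (0:ℝ) < q + 1 := by linarith
  have hpq : (0:ℝ) < p * q - 1 := by nlinarith
  have hcrit' : (q + 1) * 2 = n * (p * q - 1) := by
    rw [div_eq_div_iff hpq.ne' (by norm_num : (2:ℝ) ≠ 0)] at hcrit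
    exact hcrit
  have hα : q * (p + 1) / (q + 1) = 1 + 2 / n := by
    field_simp
    nlinarith [hcrit']
  refine ⟨n ^ 2 / (2 * C), by positivity, ?_⟩
  intro G μ₁ μ₂ C₀ R₀ hC₀ hR₀ hG hmono hGpos hμ₁ hμ₂ hμ₁0 hμ₂0 hode
  set b := C₀ * R₀ ^ (-n) with hb
  set f₀ : ℝ → ℝ := fun s => (1 / s) * (μ₁ s) ^ (q / (q + 1)) * (μ₂ s) ^ (1 / (q + 1))
    with hf₀
  set g : ℝ → ENNReal := fun s => ENNReal.ofReal (f₀ s) with hg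
  have hf₀meas : Measurable f₀ := by
    refine (Measurable.mul (Measurable.mul ?_ ?_) ?_)
    · exact measurable_const.div measurable_id
    · exact (Real.continuous_rpow_const (by positivity)).measurable.comp hμ₁
    · exact (Real.continuous_rpow_const (by positivity)).measurable.comp hμ₂
  have hgmeas : Measurable g := ENNReal.measurable_ofReal.comp hf₀meas
  -- derivative data for G
  have hGc : ContinuousOn G (Ici R₀) := hG.continuousOn
  have hdiff : DifferentiableOn ℝ G (Ici R₀) := hG.differentiableOn one_ne_zero
  set D : ℝ → ℝ := derivWithin G (Ici R₀) with hD
  have hDc : ContinuousOn D (Ici R₀) :=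
    hG.continuousOn_derivWithin (uniqueDiffOn_Ici R₀) le_rfl
  have hDeq : ∀ r, R₀ < r → D r = deriv G r := fun r hr =>
    derivWithin_of_mem_nhds (Ici_mem_nhds hr)
  have hGder : ∀ r, R₀ < r → HasDerivAt G (D r) r := by
    intro r hr
    have h1 : DifferentiableAt ℝ G r :=
      (hdiff r (le_of_lt hr)).differentiableAt (Ici_mem_nhds hr)
    rw [hDeq r hr]
    exact h1.hasDerivAt
  set F : ℝ → ℝ := fun r => n / C * (D r * G r ^ (-(1 + 2 / n))) with hF
  have hFc : ContinuousOn F (Ici R₀) := by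
    exact continuousOn_const.mul (hDc.mul (hGc.rpow_const
      (fun x hx => Or.inl (hGpos x hx).ne')))
  -- nonnegativity of D on Ioi R₀
  have hDnn : ∀ r, R₀ < r → 0 ≤ D r := by
    intro r hr
    rw [hDeq r hr]
    refine le_trans ?_ (hode r hr)
    have h1 : 0 ≤ (μ₁ (C₀ * r ^ (-n))) ^ (q / (q + 1)) := rpow_nonneg (hμ₁0 _) _
    have h2 : 0 ≤ (μ₂ (C₀ * r ^ (-n))) ^ (1 / (q + 1)) := rpow_nonneg (hμ₂0 _) _
    have h3 : 0 < G r ^ (q * (p + 1) / (q + 1)) :=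
      rpow_pos_of_pos (hGpos r (le_of_lt hr)) _
    have h4 : 0 < C / r := div_pos hC (lt_trans hR₀ hr)
    positivity
  -- the key estimate for each R > R₀
  have key : ∀ R, R₀ < R →
      (∫⁻ s in Icc (C₀ * R ^ (-n)) b, g s)
        ≤ ENNReal.ofReal (n ^ 2 / (2 * C) * (G R₀) ^ (-2 / n)) := by
    intro R hR
    have hRpos : 0 < R := lt_trans hR₀ hR
    have hpos : ∀ x ∈ Icc R₀ R, 0 < x := fun x hx => lt_of_lt_of_le hR₀ hx.1
    set φ : ℝ → ℝ := fun r => C₀ * r ^ (-n) with hφ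
    set φ' : ℝ → ℝ := fun r => C₀ * (-n * r ^ (-n - 1)) with hφ'
    have hφd : ∀ x ∈ Icc R₀ R, HasDerivWithinAt φ (φ' x) (Icc R₀ R) x := by
      intro x hx
      exact ((Real.hasDerivAt_rpow_const (Or.inl (hpos x hx).ne')).const_mul C₀).hasDerivWithinAt
    have hφanti : ∀ x ∈ Icc R₀ R, ∀ y ∈ Icc R₀ R, x < y → φ y < φ x := by
      intro x hx y hy hxy
      exact mul_lt_mul_of_pos_left
        (rpow_lt_rpow_of_neg (hpos x hx) hxy (neg_lt_zero.2 hn)) hC₀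
    have hφanti' : ∀ x ∈ Icc R₀ R, ∀ y ∈ Icc R₀ R, x ≤ y → φ y ≤ φ x := by
      intro x hx y hy hxy
      rcases eq_or_lt_of_le hxy with h | h
      · rw [h]
      · exact (hφanti x hx y hy h).le
    have hinj : InjOn φ (Icc R₀ R) := by
      intro x hx y hy hxy
      by_contra hne
      rcases lt_or_gt_of_ne hne with h | h
      · exact absurd hxy (hφanti x hx y hy h).ne'
      · exact absurd hxy (hφanti y hy x hx h).ne
    have hφcont : ContinuousOn φ (Icc R₀ R) := by
      exact continuousOn_const.mul (continuousOn_id.rpow_const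
        (fun x hx => Or.inl (hpos x hx).ne'))
    have himg : φ '' Icc R₀ R = Icc (φ R) (φ R₀) := by
      apply Subset.antisymm
      · rintro _ ⟨x, hx, rfl⟩
        exact ⟨hφanti' x hx R ⟨hR.le, le_rfl⟩ hx.2, hφanti' R₀ ⟨le_rfl, hR.le⟩ x hx hx.1⟩
      · exact intermediate_value_Icc' hR.le hφcont
    have hbφ : b = φ R₀ := rfl
    -- pointwise bound on Ioc R₀ R
    have hptwise : ∀ r ∈ Ioc R₀ R,
        ENNReal.ofReal |φ' r| * g (φ r) ≤ ENNReal.ofReal (F r) := by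
      intro r hr
      have hr0 : 0 < r := lt_trans hR₀ hr.1
      have hrn : 0 < r ^ (-n) := rpow_pos_of_pos hr0 _
      have hGr : 0 < G r := hGpos r hr.1.le
      have habs : |φ' r| = n * C₀ * r ^ (-n - 1) := by
        have h1 : φ' r = -(n * C₀ * r ^ (-n - 1)) := by rw [hφ']; ring
        rw [h1, abs_neg, abs_of_nonneg]
        have := rpow_pos_of_pos hr0 (-n - 1)
        positivity
      have hsplit : r ^ (-n - 1) = r ^ (-n) * r⁻¹ := by
        rw [show (-n - 1 : ℝ) = -n + -1 by ring, Real.rpow_add hr0, Real.rpow_neg_one]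
      rw [← ENNReal.ofReal_mul (abs_nonneg _)]
      apply ENNReal.ofReal_le_ofReal
      set P : ℝ := (μ₁ (C₀ * r ^ (-n))) ^ (q / (q + 1)) * (μ₂ (C₀ * r ^ (-n))) ^ (1 / (q + 1))
        with hPdef
      have hP : 0 ≤ P := mul_nonneg (rpow_nonneg (hμ₁0 _) _) (rpow_nonneg (hμ₂0 _) _)
      have e1 : |φ' r| * f₀ (φ r) = (n / r) * P := by
        rw [habs, hf₀, hφ, hPdef]
        simp only []
        rw [hsplit]
        field_simp
      rw [e1]
      -- use the differential inequality
      have hodeP := hode r hr.1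
      rw [hα] at hodeP
      set A : ℝ := G r ^ (1 + 2 / n) with hAdef
      have hA : 0 < A := rpow_pos_of_pos hGr _
      have h2 : C / r * P * A ≤ D r := by
        rw [hDeq r hr.1]
        calc C / r * P * A = C / r * (μ₁ (C₀ * r ^ (-n))) ^ (q / (q + 1)) *
              (μ₂ (C₀ * r ^ (-n))) ^ (1 / (q + 1)) * G r ^ (1 + 2 / n) := by
              rw [hPdef]; ring
          _ ≤ deriv G r := hodeP
      have hFr : F r = n / C * (D r * A⁻¹) := by
        rw [hF, hAdef, ← Real.rpow_neg hGr.le]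
      rw [hFr]
      have h3 : (0:ℝ) ≤ n / (C * A) := by positivity
      have h4 := mul_le_mul_of_nonneg_left h2 h3
      calc n / r * P = n / (C * A) * (C / r * P * A) := by
            field_simp
            try ring
        _ ≤ n / (C * A) * D r := h4
        _ = n / C * (D r * A⁻¹) := by
            field_simp
            try ring
    -- FTC
    set Φ : ℝ → ℝ := fun r => -(n ^ 2 / (2 * C)) * G r ^ (-2 / n) with hΦ
    have hΦcont : ContinuousOn Φ (Icc R₀ R) := by
      exact continuousOn_const.mul (ContinuousOn.rpow_const (hGc.mono Icc_subset_Ici_self)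
        (fun x hx => Or.inl (hGpos x (hx.1)).ne'))
    have hΦderiv : ∀ x ∈ Ioo R₀ R, HasDerivWithinAt Φ (F x) (Ioi x) x := by
      intro x hx
      have hGx : 0 < G x := hGpos x hx.1.le
      have h1 : HasDerivAt (fun y => G y ^ (-2 / n))
          (D x * (-2 / n) * G x ^ (-2 / n - 1)) x :=
        (hGder x hx.1).rpow_const (Or.inl hGx.ne')
      have h2 := h1.const_mul (-(n ^ 2 / (2 * C)))
      have h3 : -(n ^ 2 / (2 * C)) * (D x * (-2 / n) * G x ^ (-2 / n - 1)) = F x := by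
        rw [hF, show (-2 / n - 1 : ℝ) = -(1 + 2 / n) by ring]
        field_simp
        try ring
      rw [h3] at h2
      exact h2.hasDerivWithinAt
    have hFint : IntervalIntegrable F volume R₀ R := by
      apply ContinuousOn.intervalIntegrable
      rw [uIcc_of_le hR.le]
      exact hFc.mono Icc_subset_Ici_self
    have hFTC : ∫ r in R₀..R, F r = Φ R - Φ R₀ :=
      intervalIntegral.integral_eq_sub_of_hasDeriv_right_of_le hR.le hΦcont hΦderiv hFint
    have hFnn : ∀ r ∈ Ioc R₀ R, 0 ≤ F r := by
      intro r hr
      have hd := hDnn r hr.1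
      have hGr : 0 < G r := hGpos r hr.1.le
      have hrp := rpow_pos_of_pos hGr (-(1 + 2 / n))
      rw [hF]
      positivity
    calc (∫⁻ s in Icc (C₀ * R ^ (-n)) b, g s)
        = ∫⁻ r in Icc R₀ R, ENNReal.ofReal |φ' r| * g (φ r) := by
          rw [hbφ, show C₀ * R ^ (-n) = φ R from rfl, ← himg,
            lintegral_image_eq_lintegral_abs_deriv_mul'' measurableSet_Icc hφd hinj]
      _ = ∫⁻ r in Ioc R₀ R, ENNReal.ofReal |φ' r| * g (φ r) :=
          (setLIntegral_congr Ioc_ae_eq_Icc).symm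
      _ ≤ ∫⁻ r in Ioc R₀ R, ENNReal.ofReal (F r) := by
          refine lintegral_mono_ae ?_
          rw [ae_restrict_iff' measurableSet_Ioc]
          exact ae_of_all _ hptwise
      _ = ENNReal.ofReal (∫ r in Ioc R₀ R, F r) := by
          rw [ofReal_integral_eq_lintegral_ofReal]
          · exact (hFc.mono Icc_subset_Ici_self).integrableOn_Icc.mono_set Ioc_subset_Icc_self
          · rw [Filter.EventuallyLE, ae_restrict_iff' measurableSet_Ioc]
            exact ae_of_all _ hFnn
      _ ≤ ENNReal.ofReal (n ^ 2 / (2 * C) * (G R₀) ^ (-2 / n)) := by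
          apply ENNReal.ofReal_le_ofReal
          rw [← intervalIntegral.integral_of_le hR.le, hFTC, hΦ]
          have h1 : 0 ≤ G R ^ (-2 / n) := rpow_nonneg (hGpos R hR.le).le _
          have h2 : (0:ℝ) ≤ n ^ 2 / (2 * C) := by positivity
          nlinarith [mul_nonneg h2 h1]
  -- put things together via an increasing union
  set ν : Measure ℝ := volume.withDensity g with hν
  have hνapp : ∀ A : Set ℝ, MeasurableSet A → ν A = ∫⁻ s in A, g s := fun A hA =>
    withDensity_apply g hA
  set u : ℕ → Set ℝ := fun k => Icc (C₀ * (R₀ + k + 1) ^ (-n)) b with hu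
  have humono : Monotone u := by
    intro k l hkl
    apply Icc_subset_Icc_left
    refine mul_le_mul_of_nonneg_left ?_ hC₀.le
    refine rpow_le_rpow_of_nonpos (by positivity) ?_ (by linarith)
    have : (k:ℝ) ≤ l := Nat.cast_le.2 hkl
    linarith
  have hcover : Ioc (0:ℝ) b ⊆ ⋃ k : ℕ, u k := by
    intro s hs
    obtain ⟨k, hk⟩ := exists_nat_ge ((C₀ / s) ^ (1 / n))
    refine mem_iUnion.2 ⟨k, ⟨?_, hs.2⟩⟩
    have hs0 : 0 < s := hs.1
    have hb0 : 0 < C₀ / s := div_pos hC₀ hs0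
    have hk1 : (C₀ / s) ^ (1 / n) ≤ R₀ + k + 1 := by linarith
    have hRk : (0:ℝ) < R₀ + k + 1 := by positivity
    have h2 : C₀ / s ≤ (R₀ + k + 1) ^ n := by
      have h3 := rpow_le_rpow (rpow_nonneg hb0.le _) hk1 hn.le
      rwa [← Real.rpow_mul hb0.le, one_div_mul_cancel hn.ne', rpow_one] at h3
    have hX : 0 < (R₀ + (k:ℝ) + 1) ^ n := rpow_pos_of_pos hRk _
    rw [Real.rpow_neg hRk.le, ← div_eq_mul_inv, div_le_iff₀ hX]
    have h4 : C₀ ≤ (R₀ + k + 1) ^ n * s := (div_le_iff₀ hs0).1 h2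
    linarith
  calc (∫⁻ s in Ioc (0:ℝ) b, g s) = ν (Ioc 0 b) := (hνapp _ measurableSet_Ioc).symm
    _ ≤ ν (⋃ k : ℕ, u k) := measure_mono hcover
    _ = ⨆ k : ℕ, ν (u k) := humono.directed_le.measure_iUnion
    _ ≤ ENNReal.ofReal (n ^ 2 / (2 * C) * (G R₀) ^ (-2 / n)) := by
        refine iSup_le fun k => ?_
        rw [hνapp _ measurableSet_Icc]
        exact key (R₀ + k + 1) (by have : (0:ℝ) ≤ (k:ℝ) := Nat.cast_nonneg k; linarith)
end
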